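/- Let F be a Banach space. If every bounded linear operator from L^1[0,1] into F* is completely continuous, then F contains no copy of ℓ1. -/

import Mathlib

open Filter Topology MeasureTheory
open scoped ENNReal

/-- A sequence in a normed space is *weakly null* if it converges to `0` in the weak topology,
i.e. `φ (x n) → 0` for every continuous linear functional `φ`. -/
def WeaklyNull {E : Type*} [NormedAddCommGroup E] [NormedSpace ℝ E] (x : ℕ → E) : Prop :=
  ∀ φ : E →L[ℝ] ℝ, Tendsto (fun n => φ (x n)) atTop (𝓝 0)

/-- An operator is *completely continuous* if it maps weakly convergent sequences to norm
convergent sequences. -/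
def CompletelyContinuous {E F : Type*} [NormedAddCommGroup E] [NormedSpace ℝ E]
    [NormedAddCommGroup F] [NormedSpace ℝ F] (T : E →L[ℝ] F) : Prop :=
  ∀ (x : ℕ → E) (x₀ : E),
    (∀ φ : E →L[ℝ] ℝ, Tendsto (fun n => φ (x n)) atTop (𝓝 (φ x₀))) →
    Tendsto (fun n => T (x n)) atTop (𝓝 (T x₀))

/-- A Banach space has the *Schur property* if every weakly null sequence is norm null. -/
def SchurProperty (E : Type*) [NormedAddCommGroup E] [NormedSpace ℝ E] : Prop :=
  ∀ x : ℕ → E, WeaklyNull x → Tendsto x atTop (𝓝 0)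

/-- A Banach space has the *Dunford–Pettis property* if `φₙ(xₙ) → 0` whenever `(xₙ)` is weakly
null in `E` and `(φₙ)` is weakly null in the dual `E*`. -/
def DunfordPettisProperty (E : Type*) [NormedAddCommGroup E] [NormedSpace ℝ E] : Prop :=
  ∀ (x : ℕ → E) (φ : ℕ → E →L[ℝ] ℝ), WeaklyNull x → WeaklyNull φ →
    Tendsto (fun n => φ n (x n)) atTop (𝓝 0)

/-- `F` contains a (closed, isomorphic) copy of `X`: there is an isomorphic embedding of `X`
into `F` (its range is automatically a closed subspace when `X` is complete). -/
def ContainsCopy (F X : Type*) [NormedAddCommGroup F] [NormedSpace ℝ F]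
    [NormedAddCommGroup X] [NormedSpace ℝ X] : Prop :=
  ∃ (e : X →L[ℝ] F) (c : ℝ), 0 < c ∧ ∀ x, c * ‖x‖ ≤ ‖e x‖

/-- `F` contains a *complemented* copy of `X`: there is an embedding `e : X → F` admitting a
bounded linear left inverse (equivalently, a complemented closed subspace isomorphic to `X`). -/
def ContainsComplementedCopy (F X : Type*) [NormedAddCommGroup F] [NormedSpace ℝ F]
    [NormedAddCommGroup X] [NormedSpace ℝ X] : Prop :=
  ∃ (e : X →L[ℝ] F) (r : F →L[ℝ] X), r.comp e = ContinuousLinearMap.id ℝ X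

/-- A realization of the projective tensor product `E ⊗̂π F` as a Banach space `X`:
a bounded bilinear map `tmul` of norm `≤ 1` whose range spans a dense subspace, and such that
every bounded bilinear form on `E × F` lifts to a functional on `X` of no greater norm.
Together with completeness of `X`, these properties characterize `E ⊗̂π F` up to isometric
isomorphism. -/
structure ProjectiveTensorProduct (X E F : Type*) [NormedAddCommGroup X] [NormedSpace ℝ X]
    [NormedAddCommGroup E] [NormedSpace ℝ E] [NormedAddCommGroup F] [NormedSpace ℝ F] where
  tmul : E →L[ℝ] F →L[ℝ] X
  norm_tmul_le : ∀ x y, ‖tmul x y‖ ≤ ‖x‖ * ‖y‖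
  dense_span : Dense (↑(Submodule.span ℝ (Set.range fun p : E × F => tmul p.1 p.2)) : Set X)
  lift : ∀ B : E →L[ℝ] F →L[ℝ] ℝ, ∃ φ : X →L[ℝ] ℝ, ‖φ‖ ≤ ‖B‖ ∧ ∀ x y, φ (tmul x y) = B x y

/-- A realization of the injective tensor product `E ⊗̂ε F` as a Banach space `X`:
a bilinear map `tmul` whose range spans a dense subspace and such that the norm of any finite
sum of elementary tensors is the injective norm
`sup { |Σ φ(xᵢ) ψ(yᵢ)| : ‖φ‖ ≤ 1, ‖ψ‖ ≤ 1 }`.  Together with completeness of `X`, these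
properties characterize `E ⊗̂ε F` up to isometric isomorphism. -/
structure InjectiveTensorProduct (X E F : Type*) [NormedAddCommGroup X] [NormedSpace ℝ X]
    [NormedAddCommGroup E] [NormedSpace ℝ E] [NormedAddCommGroup F] [NormedSpace ℝ F] where
  tmul : E →L[ℝ] F →L[ℝ] X
  dense_span : Dense (↑(Submodule.span ℝ (Set.range fun p : E × F => tmul p.1 p.2)) : Set X)
  norm_sum : ∀ (n : ℕ) (x : Fin n → E) (y : Fin n → F),
    ‖∑ i, tmul (x i) (y i)‖ =
      sSup { r : ℝ | ∃ (φ : E →L[ℝ] ℝ) (ψ : F →L[ℝ] ℝ), ‖φ‖ ≤ 1 ∧ ‖ψ‖ ≤ 1 ∧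
        r = |∑ i, φ (x i) * ψ (y i)| }

/-- The Banach space `ℓ₁` of absolutely summable real sequences. -/
noncomputable abbrev ellOne : Type := lp (fun _ : ℕ => ℝ) 1

/-- The Banach space `L¹[0,1]`. -/
noncomputable abbrev LOneUnitInterval : Type :=
  Lp ℝ 1 ((volume : Measure ℝ).restrict (Set.Icc 0 1))

namespace EllOneAux


noncomputable def ulim (𝒰 : Ultrafilter ℕ) (u : ℕ → ℝ) : ℝ := limUnder 𝒰 u

lemma ulim_spec (𝒰 : Ultrafilter ℕ) (u : ℕ → ℝ) {C : ℝ} (h : ∀ n, |u n| ≤ C) :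
    Tendsto u 𝒰 (𝓝 (ulim 𝒰 u)) := by
  have hmem : Filter.Tendsto u ↑𝒰 (𝓟 (Set.Icc (-C) C)) := by
    rw [Filter.tendsto_principal]
    exact Eventually.of_forall fun n => abs_le.mp (h n)
  obtain ⟨a, -, ha⟩ := isCompact_Icc.ultrafilter_le_nhds (𝒰.map u) (by exact hmem)
  have : Tendsto u ↑𝒰 (𝓝 a) := ha
  rw [ulim, this.limUnder_eq]
  exact this

lemma ulim_eq {𝒰 : Ultrafilter ℕ} {u : ℕ → ℝ} {a : ℝ} (h : Tendsto u 𝒰 (𝓝 a)) :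
    ulim 𝒰 u = a := h.limUnder_eq

lemma ulim_add {𝒰 : Ultrafilter ℕ} {u v : ℕ → ℝ} {C D : ℝ} (hu : ∀ n, |u n| ≤ C)
    (hv : ∀ n, |v n| ≤ D) : ulim 𝒰 (fun n => u n + v n) = ulim 𝒰 u + ulim 𝒰 v :=
  ulim_eq ((ulim_spec 𝒰 u hu).add (ulim_spec 𝒰 v hv))

lemma ulim_smul {𝒰 : Ultrafilter ℕ} {u : ℕ → ℝ} {C : ℝ} (c : ℝ) (hu : ∀ n, |u n| ≤ C) :
    ulim 𝒰 (fun n => c * u n) = c * ulim 𝒰 u :=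
  ulim_eq ((ulim_spec 𝒰 u hu).const_mul c)

lemma ulim_le {𝒰 : Ultrafilter ℕ} {u : ℕ → ℝ} {C : ℝ} (hu : ∀ n, |u n| ≤ C) :
    |ulim 𝒰 u| ≤ C := by
  have := (ulim_spec 𝒰 u hu).abs
  exact le_of_tendsto this (Eventually.of_forall hu)



noncomputable abbrev μ01 : Measure ℝ := (volume : Measure ℝ).restrict (Set.Icc 0 1)

instance : IsProbabilityMeasure μ01 := by
  constructor
  rw [Measure.restrict_apply_univ, Real.volume_Icc]
  norm_num

noncomputable def rad (n : ℕ) (t : ℝ) : ℝ := (-1 : ℝ) ^ (⌊t * 2 ^ (n + 1)⌋.toNat)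

noncomputable def eps (k m j : ℕ) : ℝ := (-1 : ℝ) ^ (j / 2 ^ (m - k - 1))

def dyad (m j : ℕ) : Set ℝ := Set.Ico ((j : ℝ) / 2 ^ m) ((j + 1 : ℝ) / 2 ^ m)

lemma abs_rad (n : ℕ) (t : ℝ) : |rad n t| = 1 := by
  rw [rad, abs_pow, abs_neg, abs_one, one_pow]

lemma abs_eps (k m j : ℕ) : |eps k m j| = 1 := by
  rw [eps, abs_pow, abs_neg, abs_one, one_pow]

lemma eps_sq (k m j : ℕ) : eps k m j * eps k m j = 1 := by
  rw [eps, ← pow_add, ← two_mul, pow_mul]; norm_num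

lemma measurable_rad (n : ℕ) : Measurable (rad n) := by
  have h1 : Measurable fun t : ℝ => ⌊t * 2 ^ (n + 1)⌋ :=
    Int.measurable_floor.comp (measurable_id.mul_const _)
  exact (measurable_from_top (f := fun k : ℤ => ((-1 : ℝ) ^ k.toNat))).comp h1

lemma memLp_rad (n : ℕ) (p : ℝ≥0∞) : MemLp (rad n) p μ01 := by
  have h : MemLp (rad n) ⊤ μ01 :=
    memLp_top_of_bound (measurable_rad n).aestronglyMeasurable 1
      (Eventually.of_forall fun t => by rw [Real.norm_eq_abs, abs_rad])
  exact h.mono_exponent le_top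

lemma rad_eq_on_dyad {k m j : ℕ} (hk : k < m) (t : ℝ) (ht : t ∈ dyad m j) :
    rad k t = eps k m j := by
  rw [rad, eps]
  congr 1
  set d : ℕ := m - k - 1 with hd
  have hmd : m = (k + 1) + d := by omega
  set q : ℕ := j / 2 ^ d with hq
  have hdm : 2 ^ d * q + j % 2 ^ d = j := Nat.div_add_mod j (2 ^ d)
  have hmod : j % 2 ^ d < 2 ^ d := Nat.mod_lt _ (by positivity)
  have hjlt : j < (q + 1) * 2 ^ d := by nlinarith [hdm, hmod]
  have hKpos : (0 : ℝ) < 2 ^ d := by positivity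
  have h2m : (0 : ℝ) < 2 ^ m := by positivity
  have h2k : (0 : ℝ) < 2 ^ (k + 1) := by positivity
  have h2meq : (2 : ℝ) ^ m = 2 ^ (k + 1) * 2 ^ d := by rw [hmd, pow_add]
  obtain ⟨ht1, ht2⟩ := ht
  have hql : (q : ℝ) * 2 ^ d ≤ j := by exact_mod_cast Nat.div_mul_le_self j (2 ^ d)
  have hqu : (j : ℝ) + 1 ≤ (q + 1) * 2 ^ d := by
    exact_mod_cast hjlt
  have hfloor : ⌊t * 2 ^ (k + 1)⌋ = (q : ℤ) := by
    rw [Int.floor_eq_iff]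
    push_cast
    constructor
    · calc (q : ℝ) = (q * 2 ^ d) * 2 ^ (k + 1) / 2 ^ m := by
            rw [h2meq]; field_simp
        _ ≤ (j : ℝ) * 2 ^ (k + 1) / 2 ^ m := by gcongr
        _ = ((j : ℝ) / 2 ^ m) * 2 ^ (k + 1) := by ring
        _ ≤ t * 2 ^ (k + 1) := by gcongr
    · calc t * 2 ^ (k + 1) < ((j : ℝ) + 1) / 2 ^ m * 2 ^ (k + 1) := by gcongr
        _ ≤ ((q : ℝ) + 1) * 2 ^ d / 2 ^ m * 2 ^ (k + 1) := by gcongr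
        _ = (q : ℝ) + 1 := by rw [h2meq]; field_simp
  rw [hfloor, Int.toNat_natCast]


lemma dyad_subset {m j : ℕ} (hj : j < 2 ^ m) : dyad m j ⊆ Set.Icc 0 1 := by
  intro t ⟨h1, h2⟩
  have h2m : (0 : ℝ) < 2 ^ m := by positivity
  constructor
  · exact le_trans (by positivity) h1
  · have hj1 : (j : ℝ) + 1 ≤ 2 ^ m := by exact_mod_cast hj
    have := h2.le.trans (div_le_one_of_le₀ hj1 h2m.le)
    exact this

lemma measure_dyad {m j : ℕ} (hj : j < 2 ^ m) :
    μ01 (dyad m j) = ENNReal.ofReal ((1 : ℝ) / 2 ^ m) := by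
  have hms : MeasurableSet (dyad m j) := measurableSet_Ico
  rw [μ01, Measure.restrict_apply hms, Set.inter_eq_left.mpr (dyad_subset hj), dyad,
    Real.volume_Ico]
  congr 1
  have h2m : (0 : ℝ) < 2 ^ m := by positivity
  field_simp
  ring

lemma union_dyad (m : ℕ) : (⋃ j ∈ Finset.range (2 ^ m), dyad m j) = Set.Ico (0:ℝ) 1 := by
  ext t
  simp only [Set.mem_iUnion, Finset.mem_range, dyad, Set.mem_Ico]
  have h2m : (0 : ℝ) < 2 ^ m := by positivity
  constructor
  · rintro ⟨j, hj, h1, h2⟩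
    refine ⟨le_trans (by positivity) h1, ?_⟩
    have hj1 : (j : ℝ) + 1 ≤ 2 ^ m := by exact_mod_cast hj
    exact lt_of_lt_of_le h2 (div_le_one_of_le₀ hj1 h2m.le)
  · rintro ⟨h0, h1⟩
    refine ⟨⌊t * 2 ^ m⌋.toNat, ?_, ?_, ?_⟩
    · have : t * 2 ^ m < 2 ^ m := by nlinarith
      have h2 : ⌊t * 2 ^ m⌋ < ((2 ^ m : ℕ) : ℤ) := by
        apply Int.floor_lt.mpr; push_cast; exact this
      have hnn0 : (0:ℤ) ≤ ⌊t * 2 ^ m⌋ := Int.floor_nonneg.mpr (by positivity)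
      exact (Int.toNat_lt hnn0).mpr h2
    · have hfl : (⌊t * 2 ^ m⌋ : ℝ) ≤ t * 2 ^ m := Int.floor_le _
      have hnn : (0:ℤ) ≤ ⌊t * 2 ^ m⌋ := Int.floor_nonneg.mpr (by positivity)
      rw [div_le_iff₀ h2m]
      calc ((⌊t * 2 ^ m⌋.toNat : ℝ)) = ((⌊t * 2 ^ m⌋ : ℤ) : ℝ) := by
            exact_mod_cast congrArg Int.cast (Int.toNat_of_nonneg hnn)
        _ ≤ t * 2 ^ m := hfl
    · have hfl : t * 2 ^ m < (⌊t * 2 ^ m⌋ : ℝ) + 1 := Int.lt_floor_add_one _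
      have hnn : (0:ℤ) ≤ ⌊t * 2 ^ m⌋ := Int.floor_nonneg.mpr (by positivity)
      rw [lt_div_iff₀ h2m]
      calc t * 2 ^ m < (⌊t * 2 ^ m⌋ : ℝ) + 1 := hfl
        _ = (⌊t * 2 ^ m⌋.toNat : ℝ) + 1 := by
            congr 1
            exact_mod_cast (Int.toNat_of_nonneg hnn).symm

lemma disjoint_dyad {m : ℕ} {i j : ℕ} (hij : i ≠ j) : Disjoint (dyad m i) (dyad m j) := by
  have h2m : (0 : ℝ) < 2 ^ m := by positivity
  rw [dyad, dyad, Set.Ico_disjoint_Ico]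
  rcases lt_or_gt_of_ne hij with h | h
  · refine min_le_of_left_le (le_max_of_le_right ?_)
    gcongr
    exact_mod_cast h
  · refine min_le_of_right_le (le_max_of_le_left ?_)
    gcongr
    exact_mod_cast h

lemma integral_dyad_decomp {g : ℝ → ℝ} (hg : Integrable g μ01) (m : ℕ) :
    ∫ t, g t ∂μ01 = ∑ j ∈ Finset.range (2 ^ m), ∫ t in dyad m j, g t ∂μ01 := by
  have h1 : ∫ t, g t ∂μ01 = ∫ t in Set.Ico (0:ℝ) 1, g t ∂μ01 := by
    rw [← setIntegral_univ]
    apply setIntegral_congr_set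
    symm
    rw [ae_eq_univ]
    have : Set.Icc (0:ℝ) 1 \ Set.Ico 0 1 ⊆ {1} := by
      intro x ⟨⟨h1, h2⟩, h3⟩
      simp only [Set.mem_Ico, not_and, not_lt] at h3
      simp [le_antisymm h2 (h3 h1)]
    refine le_antisymm ?_ zero_le
    calc μ01 (Set.Ico (0:ℝ) 1)ᶜ
        = volume ((Set.Ico (0:ℝ) 1)ᶜ ∩ Set.Icc 0 1) := by
          rw [μ01, Measure.restrict_apply (measurableSet_Ico.compl)]
      _ ≤ volume {(1:ℝ)} := by
          apply measure_mono
          intro x ⟨hx1, hx2⟩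
          exact this ⟨hx2, hx1⟩
      _ = 0 := Real.volume_singleton
  rw [h1, ← union_dyad m]
  exact integral_biUnion_finset (Finset.range (2 ^ m)) (fun j _ => measurableSet_Ico)
    (fun i _ j _ hij => disjoint_dyad hij) (fun j _ => hg.integrableOn)

lemma setIntegral_dyad_const {g : ℝ → ℝ} {m j : ℕ} (hj : j < 2 ^ m) {c : ℝ}
    (hc : ∀ t ∈ dyad m j, g t = c) :
    ∫ t in dyad m j, g t ∂μ01 = c / 2 ^ m := by
  have hms : MeasurableSet (dyad m j) := measurableSet_Ico
  rw [setIntegral_congr_fun hms hc, setIntegral_const, measureReal_def, measure_dyad hj,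
    ENNReal.toReal_ofReal (by positivity), smul_eq_mul]
  ring

lemma setIntegral_dyad_rad {n m j : ℕ} (hn : n < m) (hj : j < 2 ^ m) :
    ∫ t in dyad m j, rad n t ∂μ01 = eps n m j / 2 ^ m :=
  setIntegral_dyad_const hj (fun t ht => rad_eq_on_dyad hn t ht)


lemma integrable_rad_mul (n n' : ℕ) : Integrable (fun t => rad n t * rad n' t) μ01 := by
  rw [← memLp_one_iff_integrable]
  refine MemLp.mono_exponent ?_ le_top
  refine memLp_top_of_bound ((measurable_rad n).mul (measurable_rad n')).aestronglyMeasurable 1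
    (Eventually.of_forall fun t => ?_)
  rw [Real.norm_eq_abs, abs_mul, abs_rad, abs_rad, mul_one]

lemma sum_range_two_mul (K : ℕ) (f : ℕ → ℝ) :
    ∑ j ∈ Finset.range (2 * K), f j = ∑ i ∈ Finset.range K, (f (2 * i) + f (2 * i + 1)) := by
  induction K with
  | zero => simp
  | succ K ih =>
    have h2 : 2 * (K + 1) = (2 * K + 1) + 1 := by ring
    rw [h2, Finset.sum_range_succ, Finset.sum_range_succ, ih, Finset.sum_range_succ]
    ring

lemma eps_pair {k m : ℕ} (hk : k + 1 < m) (i : ℕ) : eps k m (2 * i) = eps k m (2 * i + 1) := by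
  rw [eps, eps]
  congr 1
  have hd : 2 ^ (m - k - 1) = 2 * 2 ^ (m - k - 2) := by
    rw [← pow_succ']
    congr 1
    omega
  rw [hd, ← Nat.div_div_eq_div_mul, ← Nat.div_div_eq_div_mul]
  congr 1
  omega

lemma integral_rad_mul_self (n : ℕ) : ∫ t, rad n t * rad n t ∂μ01 = 1 := by
  have h : ∀ t : ℝ, rad n t * rad n t = 1 := fun t => by
    rw [rad, ← pow_add, ← two_mul, pow_mul]; norm_num
  simp_rw [h]
  simp

lemma integral_rad_mul_of_lt {n' n : ℕ} (h : n' < n) :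
    ∫ t, rad n t * rad n' t ∂μ01 = 0 := by
  set m := n + 1 with hm
  rw [integral_dyad_decomp (integrable_rad_mul n n') m]
  have hval : ∀ j ∈ Finset.range (2 ^ m),
      ∫ t in dyad m j, rad n t * rad n' t ∂μ01 = (eps n m j * eps n' m j) / 2 ^ m := by
    intro j hj
    rw [Finset.mem_range] at hj
    exact setIntegral_dyad_const hj (fun t ht => by
      rw [rad_eq_on_dyad (by omega) t ht, rad_eq_on_dyad (by omega) t ht])
  rw [Finset.sum_congr rfl hval]
  have heps_n : ∀ j, eps n m j = (-1 : ℝ) ^ j := by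
    intro j
    rw [eps]
    congr 1
    have : m - n - 1 = 0 := by omega
    rw [this, pow_zero, Nat.div_one]
  have h2m : 2 ^ m = 2 * 2 ^ n := by rw [hm, pow_succ']
  rw [h2m, sum_range_two_mul]
  apply Finset.sum_eq_zero
  intro i _
  rw [heps_n, heps_n, eps_pair (by omega) i, pow_succ, pow_mul]
  norm_num
  have hpow : ((-1 : ℝ)) ^ (2 * i + 1) = -1 := by rw [pow_succ, pow_mul]; norm_num
  rw [hpow]
  ring

lemma integral_rad_mul (n n' : ℕ) :
    ∫ t, rad n t * rad n' t ∂μ01 = if n = n' then 1 else 0 := by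
  rcases lt_trichotomy n n' with h | h | h
  · rw [if_neg (by omega)]
    rw [show (fun t => rad n t * rad n' t) = fun t => rad n' t * rad n t from
      funext fun t => mul_comm _ _]
    exact integral_rad_mul_of_lt h
  · rw [h, if_pos rfl]; exact integral_rad_mul_self n'
  · rw [if_neg (by omega)]; exact integral_rad_mul_of_lt h




noncomputable def R1 (n : ℕ) : Lp ℝ 1 μ01 := (memLp_rad n 1).toLp (rad n)
noncomputable def R2 (n : ℕ) : Lp ℝ 2 μ01 := (memLp_rad n 2).toLp (rad n)

/-- The natural continuous inclusion `L² → L¹`. -/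
noncomputable def incl : Lp ℝ 2 μ01 →L[ℝ] Lp ℝ 1 μ01 := by
  refine LinearMap.mkContinuous
    { toFun := fun g => ((Lp.memLp g).mono_exponent (by norm_num)).toLp ⇑g
      map_add' := ?_
      map_smul' := ?_ } 1 ?_
  · intro g g'
    have hg1 : MemLp (⇑g) 1 μ01 := (Lp.memLp g).mono_exponent (by norm_num)
    have hg1' : MemLp (⇑g') 1 μ01 := (Lp.memLp g').mono_exponent (by norm_num)
    rw [← MemLp.toLp_add hg1 hg1']
    exact MemLp.toLp_congr ((Lp.memLp (g + g')).mono_exponent (by norm_num))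
      (hg1.add hg1') (Lp.coeFn_add g g')
  · intro c g
    have hg1 : MemLp (⇑g) 1 μ01 := (Lp.memLp g).mono_exponent (by norm_num)
    rw [RingHom.id_apply, ← MemLp.toLp_const_smul c hg1]
    exact MemLp.toLp_congr ((Lp.memLp (c • g)).mono_exponent (by norm_num))
      (hg1.const_smul c) (Lp.coeFn_smul c g)
  · intro g
    rw [one_mul, LinearMap.coe_mk, AddHom.coe_mk, Lp.norm_toLp, Lp.norm_def]
    apply ENNReal.toReal_mono (Lp.eLpNorm_ne_top g)
    exact eLpNorm_le_eLpNorm_of_exponent_le (by norm_num) (Lp.aestronglyMeasurable g)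

lemma incl_R2 (n : ℕ) : incl (R2 n) = R1 n := by
  apply Lp.ext
  have h1 : ⇑(incl (R2 n)) =ᵐ[μ01]
      ⇑(((Lp.memLp (R2 n)).mono_exponent (by norm_num : (1:ℝ≥0∞) ≤ 2)).toLp
        ⇑(R2 n)) := by rfl
  have h2 : ⇑(((Lp.memLp (R2 n)).mono_exponent (by norm_num : (1:ℝ≥0∞) ≤ 2)).toLp
      ⇑(R2 n)) =ᵐ[μ01] ⇑(R2 n) := MemLp.coeFn_toLp _
  have h3 : ⇑(R2 n) =ᵐ[μ01] rad n := MemLp.coeFn_toLp _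
  have h4 : ⇑(R1 n) =ᵐ[μ01] rad n := MemLp.coeFn_toLp _
  exact h1.trans (h2.trans (h3.trans h4.symm))

lemma orthonormal_R2 : Orthonormal ℝ R2 := by
  rw [orthonormal_iff_ite]
  intro i j
  have hmul : (inner ℝ (R2 i) (R2 j) : ℝ) = ∫ t, R2 i t * R2 j t ∂μ01 := by
    rw [MeasureTheory.L2.inner_def]
    simp_rw [RCLike.inner_apply, starRingEnd_apply, star_trivial]
    exact integral_congr_ae (Eventually.of_forall fun t => mul_comm _ _)
  rw [hmul]
  have heq : (fun t => R2 i t * R2 j t) =ᵐ[μ01] fun t => rad i t * rad j t := by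
    filter_upwards [(memLp_rad i 2).coeFn_toLp, (memLp_rad j 2).coeFn_toLp] with t hi hj
    simp only [R2]
    rw [hi, hj]
  rw [integral_congr_ae heq, integral_rad_mul]

/-- The Rademacher sequence is weakly null in `L¹[0,1]`. -/
lemma weaklyNull_R1 (φ : Lp ℝ 1 μ01 →L[ℝ] ℝ) : Tendsto (fun n => φ (R1 n)) atTop (𝓝 0) := by
  set ψ : Lp ℝ 2 μ01 →L[ℝ] ℝ := φ.comp incl with hψ
  have hrep := (InnerProductSpace.toDual ℝ (Lp ℝ 2 μ01)).surjective ψ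
  obtain ⟨h, hh⟩ := hrep
  have hval : ∀ n, φ (R1 n) = (inner ℝ (R2 n) h : ℝ) := by
    intro n
    calc φ (R1 n) = ψ (R2 n) := by rw [← incl_R2 n]; rfl
      _ = (inner ℝ h (R2 n) : ℝ) := by rw [← hh]; exact InnerProductSpace.toDual_apply_apply
      _ = (inner ℝ (R2 n) h : ℝ) := real_inner_comm _ _
  simp_rw [hval]
  have hsum : Summable fun n => ‖(inner ℝ (R2 n) h : ℝ)‖ ^ 2 :=
    orthonormal_R2.inner_products_summable (x := h)
  have h2 : Tendsto (fun n => ‖(inner ℝ (R2 n) h : ℝ)‖ ^ 2) atTop (𝓝 0) :=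
    hsum.tendsto_atTop_zero
  have h3 : Tendsto (fun n => |(inner ℝ (R2 n) h : ℝ)|) atTop (𝓝 0) := by
    have h4 := h2.sqrt
    rw [Real.sqrt_zero] at h4
    refine h4.congr fun n => ?_
    rw [Real.norm_eq_abs, Real.sqrt_sq_eq_abs, abs_abs]
  exact tendsto_zero_iff_abs_tendsto_zero _ |>.mpr h3




noncomputable abbrev ell1' : Type := lp (fun _ : ℕ => ℝ) 1

lemma sum_abs_le_norm (a : ell1') (s : Finset ℕ) : ∑ k ∈ s, |a k| ≤ ‖a‖ := by
  have h := lp.sum_rpow_le_norm_rpow (p := 1) (by norm_num) a s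
  simp only [ENNReal.toReal_one, Real.rpow_one] at h
  simpa using h

lemma psiL_apply' : True := trivial

/-- The finite-sum coordinate functional on `ℓ¹`. -/
noncomputable def psiL (m j : ℕ) : ell1' →ₗ[ℝ] ℝ where
  toFun a := ∑ k ∈ Finset.range m, eps k m j * a k
  map_add' a b := by
    have h : ∀ k, (a + b) k = a k + b k := fun k => by
      rw [lp.coeFn_add]; rfl
    simp only [h, mul_add]
    rw [Finset.sum_add_distrib]
  map_smul' r a := by
    have h : ∀ k, (r • a) k = r * a k := fun k => by
      rw [lp.coeFn_smul]; rfl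
    simp only [h, RingHom.id_apply, smul_eq_mul, Finset.mul_sum]
    exact Finset.sum_congr rfl fun k _ => by ring

lemma psiL_apply (m j : ℕ) (a : ell1') :
    psiL m j a = ∑ k ∈ Finset.range m, eps k m j * a k := rfl

lemma abs_psiL_le (m j : ℕ) (a : ell1') : |psiL m j a| ≤ ‖a‖ := by
  calc |psiL m j a| = |∑ k ∈ Finset.range m, eps k m j * a k| := rfl
    _ ≤ ∑ k ∈ Finset.range m, |eps k m j * a k| := Finset.abs_sum_le_sum_abs _ _
    _ = ∑ k ∈ Finset.range m, |a k| := by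
        refine Finset.sum_congr rfl fun k _ => ?_
        rw [abs_mul, abs_eps, one_mul]
    _ ≤ ‖a‖ := sum_abs_le_norm a _

variable {F : Type*} [NormedAddCommGroup F] [NormedSpace ℝ F]

lemma exists_Psi (e : ell1' →L[ℝ] F) {c : ℝ} (hc : 0 < c) (hce : ∀ a, c * ‖a‖ ≤ ‖e a‖)
    (m j : ℕ) :
    ∃ Ψ : F →L[ℝ] ℝ, ‖Ψ‖ ≤ 1 / c ∧ ∀ a : ell1', Ψ (e a) = psiL m j a := by
  have einj : Function.Injective (e : ell1' →ₗ[ℝ] F) := by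
    intro a b hab
    have h1 : c * ‖a - b‖ ≤ ‖e (a - b)‖ := hce _
    rw [map_sub] at h1
    have h2 : e a = e b := hab
    rw [h2, sub_self, norm_zero] at h1
    have h3 : ‖a - b‖ = 0 := le_antisymm (by nlinarith [norm_nonneg (a - b)]) (norm_nonneg _)
    exact sub_eq_zero.mp (norm_eq_zero.mp h3)
  set p : Submodule ℝ F := LinearMap.range (e : ell1' →ₗ[ℝ] F) with hp
  set eEquiv : ell1' ≃ₗ[ℝ] p := LinearEquiv.ofInjective (e : ell1' →ₗ[ℝ] F) einj
  have hcoe : ∀ a : ell1', ((eEquiv a : p) : F) = e a := fun a => rfl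
  set glin : p →ₗ[ℝ] ℝ := (psiL m j).comp (eEquiv.symm : p →ₗ[ℝ] ell1') with hg
  have hbound : ∀ y : p, ‖glin y‖ ≤ (1 / c) * ‖y‖ := by
    intro y
    set a : ell1' := eEquiv.symm y with ha
    have hya : e a = (y : F) := by rw [← hcoe a, ha, eEquiv.apply_symm_apply]
    have h1 : ‖glin y‖ = |psiL m j a| := rfl
    have h2 : |psiL m j a| ≤ ‖a‖ := abs_psiL_le m j a
    have h3 : c * ‖a‖ ≤ ‖(y : F)‖ := by rw [← hya]; exact hce a
    have h4 : ‖(y : F)‖ = ‖y‖ := rfl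
    rw [h1, one_div]
    rw [h4] at h3
    calc |psiL m j a| ≤ ‖a‖ := h2
      _ ≤ c⁻¹ * ‖y‖ := by
          rw [← div_eq_inv_mul, le_div_iff₀ hc, mul_comm]
          exact h3
  set g : p →L[ℝ] ℝ := glin.mkContinuous (1 / c) hbound with hgdef
  obtain ⟨Ψ, hΨext, hΨnorm⟩ := exists_extension_norm_eq p g
  refine ⟨Ψ, ?_, ?_⟩
  · rw [hΨnorm]
    exact glin.mkContinuous_norm_le (by positivity) hbound
  · intro a
    have hmem : e a ∈ p := ⟨a, rfl⟩
    have h1 : Ψ (e a) = g ⟨e a, hmem⟩ := hΨext ⟨e a, hmem⟩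
    have h2 : (⟨e a, hmem⟩ : p) = eEquiv a := by
      apply Subtype.ext
      rw [hcoe a]
    rw [h1, h2]
    show glin (eEquiv a) = psiL m j a
    rw [hg]
    simp

end EllOneAux

open EllOneAux

/-- If every bounded operator from `L¹[0,1]` into `F*` is completely continuous, then `F`
contains no copy of `ℓ₁`. -/
theorem not_containsCopy_ellOne_of_forall_completelyContinuous
    {F : Type*} [NormedAddCommGroup F] [NormedSpace ℝ F] [CompleteSpace F]
    (hcc : ∀ T : LOneUnitInterval →L[ℝ] (F →L[ℝ] ℝ), CompletelyContinuous T) :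
    ¬ ContainsCopy F ellOne := by
  rintro ⟨e, c, hc, hce⟩
  choose Ψ hΨnorm hΨval using fun m j => exists_Psi e hc hce m j
  set 𝒰 : Ultrafilter ℕ := Ultrafilter.of atTop with h𝒰
  have h𝒰le : (𝒰 : Filter ℕ) ≤ atTop := Ultrafilter.of_le _
  -- the finite-level bilinear approximations
  set S : ℕ → LOneUnitInterval → F → ℝ := fun m f x =>
    ∑ j ∈ Finset.range (2 ^ m), Ψ m j x * ∫ t in dyad m j, f t ∂μ01 with hS
  have hSb : ∀ m (f : LOneUnitInterval) x, |S m f x| ≤ 1 / c * ‖x‖ * ‖f‖ := by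
    intro m f x
    have habs : ∀ j ∈ Finset.range (2 ^ m),
        |Ψ m j x * ∫ t in dyad m j, f t ∂μ01| ≤ (1 / c * ‖x‖) * |∫ t in dyad m j, f t ∂μ01| := by
      intro j _
      rw [abs_mul]
      gcongr
      calc |Ψ m j x| ≤ ‖Ψ m j‖ * ‖x‖ := (Ψ m j).le_opNorm x
        _ ≤ 1 / c * ‖x‖ := by gcongr; exact hΨnorm m j
    calc |S m f x| ≤ ∑ j ∈ Finset.range (2 ^ m), |Ψ m j x * ∫ t in dyad m j, f t ∂μ01| :=
          Finset.abs_sum_le_sum_abs _ _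
      _ ≤ ∑ j ∈ Finset.range (2 ^ m), (1 / c * ‖x‖) * |∫ t in dyad m j, f t ∂μ01| :=
          Finset.sum_le_sum habs
      _ = (1 / c * ‖x‖) * ∑ j ∈ Finset.range (2 ^ m), |∫ t in dyad m j, f t ∂μ01| := by
          rw [Finset.mul_sum]
      _ ≤ 1 / c * ‖x‖ * ‖f‖ := by
          refine mul_le_mul_of_nonneg_left ?_
            (mul_nonneg (div_nonneg zero_le_one hc.le) (norm_nonneg x))
          calc ∑ j ∈ Finset.range (2 ^ m), |∫ t in dyad m j, f t ∂μ01|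
              ≤ ∑ j ∈ Finset.range (2 ^ m), ∫ t in dyad m j, ‖f t‖ ∂μ01 := by
                refine Finset.sum_le_sum fun j _ => ?_
                rw [← Real.norm_eq_abs]
                exact norm_integral_le_integral_norm _
            _ = ∫ t, ‖f t‖ ∂μ01 :=
                (integral_dyad_decomp ((L1.integrable_coeFn f).norm) m).symm
            _ = ‖f‖ := (L1.norm_eq_integral_norm f).symm
  set B : LOneUnitInterval → F → ℝ := fun f x => ulim 𝒰 (fun m => S m f x) with hB
  have hBtendsto : ∀ (f : LOneUnitInterval) x, Tendsto (fun m => S m f x) 𝒰 (𝓝 (B f x)) :=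
    fun f x => ulim_spec _ _ (fun m => hSb m f x)
  have hBb : ∀ (f : LOneUnitInterval) x, |B f x| ≤ 1 / c * ‖x‖ * ‖f‖ :=
    fun f x => ulim_le (fun m => hSb m f x)
  -- linearity in x
  have hBaddx : ∀ (f : LOneUnitInterval) x x', B f (x + x') = B f x + B f x' := by
    intro f x x'
    refine ulim_eq (((hBtendsto f x).add (hBtendsto f x')).congr fun m => ?_)
    rw [hS]
    simp only [map_add, add_mul]
    rw [Finset.sum_add_distrib]
  have hBsmulx : ∀ (f : LOneUnitInterval) (r : ℝ) x, B f (r • x) = r * B f x := by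
    intro f r x
    refine ulim_eq (((hBtendsto f x).const_mul r).congr fun m => ?_)
    rw [hS]
    simp only [Finset.mul_sum]
    refine Finset.sum_congr rfl fun j _ => ?_
    rw [(Ψ m j).map_smul]
    simp only [smul_eq_mul]
    ring
  -- linearity in f
  have hint : ∀ (f : LOneUnitInterval) (s : Set ℝ), IntegrableOn (⇑f) s μ01 :=
    fun f s => (L1.integrable_coeFn f).integrableOn
  have hsetadd : ∀ (f f' : LOneUnitInterval) (s : Set ℝ),
      ∫ t in s, (f + f') t ∂μ01 = (∫ t in s, f t ∂μ01) + ∫ t in s, f' t ∂μ01 := by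
    intro f f' s
    rw [integral_congr_ae (ae_restrict_of_ae (Lp.coeFn_add f f'))]
    exact integral_add (hint f s) (hint f' s)
  have hsetsmul : ∀ (f : LOneUnitInterval) (r : ℝ) (s : Set ℝ),
      ∫ t in s, (r • f) t ∂μ01 = r * ∫ t in s, f t ∂μ01 := by
    intro f r s
    rw [integral_congr_ae (ae_restrict_of_ae (Lp.coeFn_smul r f))]
    simp only [Pi.smul_apply, smul_eq_mul]
    rw [integral_const_mul]
  have hBaddf : ∀ (f f' : LOneUnitInterval) x, B (f + f') x = B f x + B f' x := by
    intro f f' x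
    refine ulim_eq (((hBtendsto f x).add (hBtendsto f' x)).congr fun m => ?_)
    rw [hS]
    simp only
    rw [← Finset.sum_add_distrib]
    refine Finset.sum_congr rfl fun j _ => ?_
    rw [hsetadd f f' (dyad m j)]
    ring
  have hBsmulf : ∀ (f : LOneUnitInterval) (r : ℝ) x, B (r • f) x = r * B f x := by
    intro f r x
    refine ulim_eq (((hBtendsto f x).const_mul r).congr fun m => ?_)
    rw [hS]
    simp only
    rw [Finset.mul_sum]
    refine Finset.sum_congr rfl fun j _ => ?_
    rw [hsetsmul f r (dyad m j)]
    ring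
  -- the operator T
  have hBb2 : ∀ (f : LOneUnitInterval) x, ‖B f x‖ ≤ 1 / c * ‖f‖ * ‖x‖ := by
    intro f x
    rw [Real.norm_eq_abs]
    calc |B f x| ≤ 1 / c * ‖x‖ * ‖f‖ := hBb f x
      _ = 1 / c * ‖f‖ * ‖x‖ := by ring
  set Tf : LOneUnitInterval → (F →L[ℝ] ℝ) := fun f =>
    LinearMap.mkContinuous
      { toFun := fun x => B f x
        map_add' := hBaddx f
        map_smul' := fun r x => hBsmulx f r x }
      (1 / c * ‖f‖) (fun x => hBb2 f x) with hTfdef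
  have hTfnorm : ∀ f, ‖Tf f‖ ≤ 1 / c * ‖f‖ := fun f =>
    LinearMap.mkContinuous_norm_le _
      (mul_nonneg (div_nonneg zero_le_one hc.le) (norm_nonneg f)) _
  set T : LOneUnitInterval →L[ℝ] (F →L[ℝ] ℝ) :=
    LinearMap.mkContinuous
      { toFun := Tf
        map_add' := fun f f' => ContinuousLinearMap.ext fun x => hBaddf f f' x
        map_smul' := fun r f => ContinuousLinearMap.ext fun x => hBsmulf f r x }
      (1 / c) (fun f => hTfnorm f) with hT
  have hTapp : ∀ (f : LOneUnitInterval) x, T f x = B f x := fun f x => rfl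
  -- T is completely continuous, R1 is weakly null
  have hccT := hcc T R1 0 (fun φ => by
    rw [map_zero]
    exact weaklyNull_R1 φ)
  rw [map_zero] at hccT
  have hnorm0 : Tendsto (fun n => ‖T (R1 n)‖ * ‖e‖) atTop (𝓝 0) := by
    have h1 : Tendsto (fun n => ‖T (R1 n)‖) atTop (𝓝 0) := by
      have := hccT.norm
      rwa [norm_zero] at this
    have := h1.mul_const ‖e‖
    rwa [zero_mul] at this
  -- evaluation on the canonical images of the unit vectors
  have heval : ∀ n : ℕ, B (R1 n) (e (lp.single 1 n 1)) = 1 := by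
    intro n
    refine ulim_eq (Tendsto.mono_left ?_ h𝒰le)
    have hev : ∀ m ≥ n + 1, S m (R1 n) (e (lp.single 1 n 1)) = 1 := by
      intro m hm
      rw [hS]
      simp only
      have hterm : ∀ j ∈ Finset.range (2 ^ m),
          Ψ m j (e (lp.single 1 n 1)) * ∫ t in dyad m j, (R1 n) t ∂μ01 = 1 / 2 ^ m := by
        intro j hj
        rw [Finset.mem_range] at hj
        have h1 : ∫ t in dyad m j, (R1 n) t ∂μ01 = eps n m j / 2 ^ m := by
          have hcoe : ⇑(R1 n) =ᵐ[μ01] rad n := MemLp.coeFn_toLp _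
          rw [integral_congr_ae (ae_restrict_of_ae hcoe)]
          exact setIntegral_dyad_rad (by omega) hj
        have h2 : Ψ m j (e (lp.single 1 n 1)) = eps n m j := by
          rw [hΨval m j, psiL_apply]
          rw [Finset.sum_eq_single n]
          · rw [lp.single_apply_self, mul_one]
          · intro k _ hk
            rw [lp.single_apply_ne 1 n 1 hk, mul_zero]
          · intro hn
            exact absurd (Finset.mem_range.mpr (by omega : n < m)) hn
        rw [h1, h2, ← mul_div_assoc, eps_sq]
      rw [Finset.sum_congr rfl hterm, Finset.sum_const, Finset.card_range, nsmul_eq_mul]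
      rw [mul_one_div]
      field_simp
      norm_num
    refine Tendsto.congr' ?_ tendsto_const_nhds
    filter_upwards [eventually_ge_atTop (n + 1)] with m hm
    exact (hev m hm).symm
  -- contradiction
  have hone : ∀ n : ℕ, (1 : ℝ) ≤ ‖T (R1 n)‖ * ‖e‖ := by
    intro n
    have h1 : (1 : ℝ) = T (R1 n) (e (lp.single 1 n 1)) := by
      rw [hTapp, heval n]
    have hsing : ‖(lp.single 1 n 1 : ell1')‖ = 1 := by
      have := lp.norm_single (p := 1) (E := fun _ : ℕ => ℝ) (by norm_num) n (1 : ℝ)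
      simpa using this
    calc (1 : ℝ) = T (R1 n) (e (lp.single 1 n 1)) := h1
      _ ≤ ‖T (R1 n)‖ * ‖e (lp.single 1 n 1)‖ := by
          refine le_trans (le_abs_self _) ?_
          rw [← Real.norm_eq_abs]
          exact (T (R1 n)).le_opNorm _
      _ ≤ ‖T (R1 n)‖ * (‖e‖ * ‖lp.single 1 n 1‖) := by
          gcongr
          exact e.le_opNorm _
      _ = ‖T (R1 n)‖ * ‖e‖ := by rw [hsing, mul_one]
  have := hnorm0.eventually_lt_const (by norm_num : (0:ℝ) < 1)
  obtain ⟨n, hn⟩ := this.exists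
  exact absurd (hone n) (not_le.mpr hn)
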